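/- Suppose π₂(0)=0 and dπ₂/dt = 2(1−e^{−t})·e^{−t}·e^{2e^{−t}−2}. Then π₂(t) = (1 − (3−2e^{−t})·e^{2e^{−t}−2})/2, and lim_{t→∞} π₂(t) = (1 − 3e^{−2})/2. Moreover, with π₀(t) = e^{−t}e^{2e^{−t}−2} and π₁ = 1 − π₀ − π₂, one has π₁(∞) = (1+3e^{−2})/2. -/

import Mathlib

open Real Filter

lemma F_hasDerivAt (t : ℝ) :
    HasDerivAt (fun t : ℝ => (1 - (3 - 2 * Real.exp (-t)) * Real.exp (2 * Real.exp (-t) - 2)) / 2)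
      (2 * (1 - Real.exp (-t)) * Real.exp (-t) * Real.exp (2 * Real.exp (-t) - 2)) t := by
  have hu : HasDerivAt (fun t : ℝ => Real.exp (-t)) (-Real.exp (-t)) t := by
    simpa [Function.comp_def] using (Real.hasDerivAt_exp (-t)).comp t (hasDerivAt_neg t)
  have he : HasDerivAt (fun t : ℝ => Real.exp (2 * Real.exp (-t) - 2))
      (Real.exp (2 * Real.exp (-t) - 2) * (2 * (-Real.exp (-t)))) t := by
    have hin : HasDerivAt (fun t : ℝ => 2 * Real.exp (-t) - 2) (2 * (-Real.exp (-t))) t :=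
      ((hu.const_mul 2).sub_const 2)
    simpa [Function.comp_def] using (Real.hasDerivAt_exp (2 * Real.exp (-t) - 2)).comp t hin
  have h3 : HasDerivAt (fun t : ℝ => 3 - 2 * Real.exp (-t)) (-(2 * (-Real.exp (-t)))) t :=
    (hu.const_mul 2).const_sub 3
  have := ((h3.mul he).const_sub 1).div_const 2
  refine this.congr_deriv ?_
  ring

theorem trimer_modelB_fractions (π₂ : ℝ → ℝ) (h0 : π₂ 0 = 0)
    (hode : ∀ t : ℝ, HasDerivAt π₂
      (2 * (1 - Real.exp (-t)) * Real.exp (-t) * Real.exp (2 * Real.exp (-t) - 2)) t) :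
    (∀ t : ℝ, π₂ t
        = (1 - (3 - 2 * Real.exp (-t)) * Real.exp (2 * Real.exp (-t) - 2)) / 2) ∧
    Tendsto π₂ atTop (nhds ((1 - 3 * Real.exp (-2)) / 2)) ∧
    Tendsto (fun t : ℝ =>
        1 - Real.exp (-t) * Real.exp (2 * Real.exp (-t) - 2) - π₂ t)
      atTop (nhds ((1 + 3 * Real.exp (-2)) / 2)) := by
  set F : ℝ → ℝ :=
    fun t => (1 - (3 - 2 * Real.exp (-t)) * Real.exp (2 * Real.exp (-t) - 2)) / 2 with hF
  have hdiff : ∀ t, HasDerivAt (fun t => π₂ t - F t) 0 t := by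
    intro t
    have := (hode t).sub (F_hasDerivAt t)
    rw [sub_self] at this
    exact this
  have hconst : ∀ t : ℝ, π₂ t - F t = π₂ 0 - F 0 := by
    intro t
    exact is_const_of_deriv_eq_zero (fun x => (hdiff x).differentiableAt)
      (fun x => (hdiff x).deriv) t 0
  have hF0 : F 0 = 0 := by simp [hF]; norm_num
  have heq : ∀ t, π₂ t = F t := by
    intro t
    have := hconst t
    rw [h0, hF0] at this
    linarith
  have hexp : Tendsto (fun t : ℝ => Real.exp (-t)) atTop (nhds 0) := by
    simpa using Real.tendsto_exp_neg_atTop_nhds_zero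
  have hcont : Continuous (fun u : ℝ => (1 - (3 - 2 * u) * Real.exp (2 * u - 2)) / 2) := by
    continuity
  have hlim : Tendsto F atTop (nhds ((1 - 3 * Real.exp (-2)) / 2)) := by
    have := (hcont.tendsto 0).comp hexp
    simpa [hF, Function.comp_def] using this
  have hπlim : Tendsto π₂ atTop (nhds ((1 - 3 * Real.exp (-2)) / 2)) := by
    simpa [funext heq] using hlim
  refine ⟨heq, hπlim, ?_⟩
  have hcont2 : Continuous (fun u : ℝ => u * Real.exp (2 * u - 2)) := by continuity
  have h0lim : Tendsto (fun t : ℝ => Real.exp (-t) * Real.exp (2 * Real.exp (-t) - 2))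
      atTop (nhds 0) := by
    have := (hcont2.tendsto 0).comp hexp
    simpa [Function.comp_def] using this
  have hval : (1 + 3 * Real.exp (-2)) / 2 = 1 - 0 - (1 - 3 * Real.exp (-2)) / 2 := by ring
  rw [hval]
  exact (tendsto_const_nhds.sub h0lim).sub hπlim
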